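/- For any ρ ∈ pm(G), the algebras κ_par^{ρ*}G and (κ_par^ρ G)^{op} are isomorphic, where ρ*(g,h) = ρ(h⁻¹,g⁻¹). -/
import Mathlib


/-- A partial projective representation of a group `G` in a unital `κ`-algebra,
together with a factor set `σ` for it. -/
structure PartialProjectiveRep (κ : Type) (G : Type) [Field κ] [Group G] where
  carrier : Type
  [ringCarrier : Ring carrier]
  [algCarrier : Algebra κ carrier]
  Γ : G → carrier
  σ : G → G → κ
  cond1 : ∀ g h : G, σ g h = 0 → Γ g⁻¹ * Γ (g * h) = 0 ∧ Γ (g * h) * Γ h⁻¹ = 0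
  cond2 : ∀ g h : G, Γ g⁻¹ * Γ g * Γ h = σ g h • (Γ g⁻¹ * Γ (g * h))
  cond3 : ∀ g h : G, Γ g * Γ h * Γ h⁻¹ = σ g h • (Γ (g * h) * Γ h⁻¹)
  cond4 : Γ 1 = 1
  factor : ∀ g h : G, Γ g * Γ h = 0 → σ g h = 0

/-- `ρ ∈ pm(G)`. -/
def IsPartialFactorSet (κ : Type) (G : Type) [Field κ] [Group G] (ρ : G → G → κ) : Prop :=
  ∃ P : PartialProjectiveRep κ G, P.σ = ρ

/-- The defining relations of the twisted partial group algebra `κ_par^σ G`. -/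
inductive TPGARel (κ : Type) (G : Type) [Field κ] [Group G] (σ : G → G → κ) :
    FreeAlgebra κ G → FreeAlgebra κ G → Prop
  | zero_left {g h : G} : σ g h = 0 →
      TPGARel κ G σ (FreeAlgebra.ι κ g⁻¹ * FreeAlgebra.ι κ (g * h)) 0
  | zero_right {g h : G} : σ g h = 0 →
      TPGARel κ G σ (FreeAlgebra.ι κ (g * h) * FreeAlgebra.ι κ h⁻¹) 0
  | left (g h : G) :
      TPGARel κ G σ (FreeAlgebra.ι κ g⁻¹ * FreeAlgebra.ι κ g * FreeAlgebra.ι κ h)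
        (σ g h • (FreeAlgebra.ι κ g⁻¹ * FreeAlgebra.ι κ (g * h)))
  | right (g h : G) :
      TPGARel κ G σ (FreeAlgebra.ι κ g * FreeAlgebra.ι κ h * FreeAlgebra.ι κ h⁻¹)
        (σ g h • (FreeAlgebra.ι κ (g * h) * FreeAlgebra.ι κ h⁻¹))
  | mul_one (g : G) :
      TPGARel κ G σ (FreeAlgebra.ι κ g * FreeAlgebra.ι κ 1) (FreeAlgebra.ι κ g)
  | one_mul (g : G) :
      TPGARel κ G σ (FreeAlgebra.ι κ 1 * FreeAlgebra.ι κ g) (FreeAlgebra.ι κ g)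

/-- The twisted partial group algebra `κ_par^σ G`. -/
abbrev TwistedPartialGroupAlgebra (κ : Type) (G : Type) [Field κ] [Group G]
    (σ : G → G → κ) : Type :=
  RingQuot (TPGARel κ G σ)

open MulOpposite in
/-- The canonical algebra map `κ_par^τ G →ₐ (κ_par^σ G)ᵐᵒᵖ` sending `[g]` to `op [g⁻¹]`,
when `τ g h = σ h⁻¹ g⁻¹`. -/
noncomputable def tpgaOpHom {κ G : Type} [Field κ] [Group G] (σ τ : G → G → κ)
    (hστ : ∀ g h : G, τ g h = σ h⁻¹ g⁻¹) :
    TwistedPartialGroupAlgebra κ G τ →ₐ[κ] (TwistedPartialGroupAlgebra κ G σ)ᵐᵒᵖ :=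
  RingQuot.liftAlgHom κ ⟨FreeAlgebra.lift κ
      (fun g => op (RingQuot.mkAlgHom κ (TPGARel κ G σ) (FreeAlgebra.ι κ g⁻¹))), by
    intro x y r
    induction r with
    | @zero_left g h h0 =>
      rw [hστ] at h0
      simp only [map_mul, map_zero, FreeAlgebra.lift_ι_apply, mul_inv_rev,
        ← MulOpposite.op_mul, ← MulOpposite.op_zero]
      congr 1
      rw [← map_mul, ← map_zero (RingQuot.mkAlgHom κ (TPGARel κ G σ))]
      exact RingQuot.mkAlgHom_rel κ (TPGARel.zero_right h0)
    | @zero_right g h h0 =>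
      rw [hστ] at h0
      simp only [map_mul, map_zero, FreeAlgebra.lift_ι_apply, mul_inv_rev,
        ← MulOpposite.op_mul, ← MulOpposite.op_zero]
      congr 1
      rw [← map_mul, ← map_zero (RingQuot.mkAlgHom κ (TPGARel κ G σ))]
      exact RingQuot.mkAlgHom_rel κ (TPGARel.zero_left h0)
    | left g h =>
      rw [hστ]
      simp only [map_mul, map_smul, FreeAlgebra.lift_ι_apply, mul_inv_rev,
        ← MulOpposite.op_mul, ← MulOpposite.op_smul, ← mul_assoc]
      congr 1
      rw [← map_mul, ← map_mul, ← map_mul, ← map_smul]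
      exact RingQuot.mkAlgHom_rel κ (TPGARel.right h⁻¹ g⁻¹)
    | right g h =>
      rw [hστ]
      simp only [map_mul, map_smul, FreeAlgebra.lift_ι_apply, mul_inv_rev,
        ← MulOpposite.op_mul, ← MulOpposite.op_smul, ← mul_assoc]
      congr 1
      rw [← map_mul, ← map_mul, ← map_mul, ← map_smul]
      exact RingQuot.mkAlgHom_rel κ (TPGARel.left h⁻¹ g⁻¹)
    | mul_one g =>
      simp only [map_mul, FreeAlgebra.lift_ι_apply, inv_one, ← MulOpposite.op_mul]
      congr 1
      rw [← map_mul]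
      exact RingQuot.mkAlgHom_rel κ (TPGARel.one_mul g⁻¹)
    | one_mul g =>
      simp only [map_mul, FreeAlgebra.lift_ι_apply, inv_one, ← MulOpposite.op_mul]
      congr 1
      rw [← map_mul]
      exact RingQuot.mkAlgHom_rel κ (TPGARel.mul_one g⁻¹)⟩

open MulOpposite in
theorem tpgaOpHom_mk {κ G : Type} [Field κ] [Group G] (σ τ : G → G → κ)
    (hστ : ∀ g h : G, τ g h = σ h⁻¹ g⁻¹) (g : G) :
    tpgaOpHom σ τ hστ (RingQuot.mkAlgHom κ (TPGARel κ G τ) (FreeAlgebra.ι κ g)) =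
      op (RingQuot.mkAlgHom κ (TPGARel κ G σ) (FreeAlgebra.ι κ g⁻¹)) := by
  rw [tpgaOpHom, RingQuot.liftAlgHom_mkAlgHom_apply, FreeAlgebra.lift_ι_apply]

/-- For any `ρ ∈ pm(G)`, the algebras `κ_par^{ρ*}G` and
`(κ_par^ρ G)ᵒᵖ` are isomorphic, where `ρ*(g,h) = ρ(h⁻¹,g⁻¹)`. -/
theorem twistedPartialGroupAlgebra_involution_iso
    {κ G : Type} [Field κ] [Group G] (ρ : G → G → κ)
    (hpm : IsPartialFactorSet κ G ρ) :
    Nonempty (TwistedPartialGroupAlgebra κ G (fun g h => ρ h⁻¹ g⁻¹) ≃ₐ[κ]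
      (TwistedPartialGroupAlgebra κ G ρ)ᵐᵒᵖ) := by
  classical
  set τ : G → G → κ := fun g h => ρ h⁻¹ g⁻¹ with hτdef
  have hτ : ∀ g h : G, τ g h = ρ h⁻¹ g⁻¹ := fun _ _ => rfl
  have hρ : ∀ g h : G, ρ g h = τ h⁻¹ g⁻¹ := by intro g h; simp [hτdef]
  let φ : TwistedPartialGroupAlgebra κ G τ →ₐ[κ] (TwistedPartialGroupAlgebra κ G ρ)ᵐᵒᵖ :=
    tpgaOpHom ρ τ hτ
  let ψ : TwistedPartialGroupAlgebra κ G ρ →ₐ[κ] (TwistedPartialGroupAlgebra κ G τ)ᵐᵒᵖ :=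
    tpgaOpHom τ ρ hρ
  refine ⟨AlgEquiv.ofAlgHom φ (AlgHom.opComm ψ) ?_ ?_⟩
  · apply AlgHom.op.symm.injective
    ext g
    simp [φ, ψ, AlgHom.opComm, tpgaOpHom_mk]
  · ext g
    simp [φ, ψ, AlgHom.opComm, tpgaOpHom_mk]
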